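/- arXiv:2305.02872 — 2 statements merged into one kernel-verified Lean document; each statement's English description precedes it below -/
import Mathlib

section
/- Let p = (P_1, …, P_m) and q = (Q_1, …, Q_n) be probability vectors with strictly positive entries. If P_1^t + ⋯ + P_m^t = Q_1^t + ⋯ + Q_n^t for every t ∈ ℝ, then m = n and there exists a permutation π of {1, …, n} such that P_{π(i)} = Q_i whenever 1 ≤ i ≤ n. -/
open MeasureTheory ProbabilityTheory Filter

namespace Finitary

/-- The free group `F_ℓ` on `ℓ` generators. -/
abbrev FG (ℓ : ℕ) := FreeGroup (Fin ℓ)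

instance {ℓ : ℕ} : Countable (FG ℓ) := FreeGroup.toWord_injective.countable

/-- The word length on the free group. -/
noncomputable def wl {ℓ : ℕ} (g : FG ℓ) : ℕ := FreeGroup.norm g

/-- The ball `B(r)` of radius `r` centered at the identity. -/
def ball (ℓ r : ℕ) : Set (FG ℓ) := {g | wl g ≤ r}

/-- `W_a`: the set of reduced words ending in the generator `a`, together with the identity. -/
def Wa {ℓ : ℕ} (a : Fin ℓ) : Set (FG ℓ) :=
  {g | g = 1 ∨ wl g = wl (g * (FreeGroup.of a)⁻¹) + 1}

/-- The configuration space `X_p = {1,…,m}^{F_ℓ}`. -/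
abbrev Conf (ℓ m : ℕ) := FG ℓ → Fin m

/-- The shift action `(g·x)_h = x_{g⁻¹h}`. -/
def shift {ℓ m : ℕ} (g : FG ℓ) (x : Conf ℓ m) : Conf ℓ m := fun h => x (g⁻¹ * h)

/-- `μ` is the Bernoulli product measure on `X_p` with marginal weights `P`:
every cylinder set has measure equal to the product of the weights of its fixed symbols. -/
def IsBernoulli {ℓ m : ℕ} (P : Fin m → ℝ) (μ : Measure (Conf ℓ m)) : Prop :=
  IsProbabilityMeasure μ ∧
    ∀ (A : Finset (FG ℓ)) (σ : FG ℓ → Fin m),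
      (μ {x | ∀ g ∈ A, x g = σ g}).toReal = ∏ g ∈ A, P (σ g)

/-- The set of radii `r` such that the ball `B(r)` determines `φ(x)_e`. -/
def codeSet {ℓ m n : ℕ} (φ : Conf ℓ m → Conf ℓ n) (x : Conf ℓ m) : Set ℕ :=
  {r | ∀ x' : Conf ℓ m, (∀ g ∈ ball ℓ r, x' g = x g) → φ x' 1 = φ x 1}

/-- `r_φ(x)`: the least radius of a ball determining `φ(x)_e`. -/
noncomputable def rphi {ℓ m n : ℕ} (φ : Conf ℓ m → Conf ℓ n) (x : Conf ℓ m) : ℕ :=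
  sInf (codeSet φ x)

/-- `v_φ(x) = |B(r_φ(x))|`. -/
noncomputable def vphi {ℓ m n : ℕ} (φ : Conf ℓ m → Conf ℓ n) (x : Conf ℓ m) : ℕ :=
  (ball ℓ (rphi φ x)).ncard

/-- A finitary coding: a measurable, equivariant, measure-preserving map which is
a.e. finitarily determined at the identity coordinate (i.e. continuous off a null set). -/
structure IsFinitaryCoding {ℓ m n : ℕ} (μp : Measure (Conf ℓ m)) (μq : Measure (Conf ℓ n))
    (φ : Conf ℓ m → Conf ℓ n) : Prop where
  measurable : Measurable φ
  measurePreserving : MeasurePreserving φ μp μq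
  equivariant : ∀ g : FG ℓ, ∀ᵐ x ∂μp, φ (shift g x) = shift g (φ x)
  finitary : ∀ᵐ x ∂μp, (codeSet φ x).Nonempty

/-- A finitary isomorphism: a pair of mutually inverse (mod null sets) finitary codings. -/
structure IsFinitaryIso {ℓ m n : ℕ} (μp : Measure (Conf ℓ m)) (μq : Measure (Conf ℓ n))
    (φ : Conf ℓ m → Conf ℓ n) (ψ : Conf ℓ n → Conf ℓ m) : Prop where
  toCoding : IsFinitaryCoding μp μq φ
  invCoding : IsFinitaryCoding μq μp ψ
  leftInv : ∀ᵐ x ∂μp, ψ (φ x) = x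
  rightInv : ∀ᵐ y ∂μq, φ (ψ y) = y

/-- Finite expectation of code volume: `∫ v_φ dμ_p < ∞` and `∫ v_{φ⁻¹} dμ_q < ∞`. -/
def FiniteExpectation {ℓ m n : ℕ} (μp : Measure (Conf ℓ m)) (μq : Measure (Conf ℓ n))
    (φ : Conf ℓ m → Conf ℓ n) (ψ : Conf ℓ n → Conf ℓ m) : Prop :=
  (∫⁻ x, (vphi φ x : ENNReal) ∂μp) < ⊤ ∧ (∫⁻ y, (vphi ψ y : ENNReal) ∂μq) < ⊤

/-- The sub-σ-algebra generated by the coordinate maps `x ↦ x_g`, `g ∈ S`. -/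
def coordAlg {ℓ m : ℕ} (S : Set (FG ℓ)) : MeasurableSpace (Conf ℓ m) :=
  MeasurableSpace.comap (fun x => S.restrict x) inferInstance

/-- The past algebra `𝒜_{p,a}`, generated by the coordinates in `W_a`. -/
def pastAlg {ℓ m : ℕ} (a : Fin ℓ) : MeasurableSpace (Conf ℓ m) := coordAlg (Wa a)

/-- The atom of `x` for the σ-algebra generated by the coordinates in `S`. -/
def atomOn {ℓ m : ℕ} (S : Set (FG ℓ)) (x : Conf ℓ m) : Set (Conf ℓ m) :=
  {y | ∀ g ∈ S, y g = x g}

/-- The regular conditional probability `μ^𝒞(s | x)` given the sub-σ-algebra `𝒞`. -/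
noncomputable def condProb {ℓ m : ℕ} (μ : Measure (Conf ℓ m)) [IsFiniteMeasure μ]
    (𝒞 : MeasurableSpace (Conf ℓ m)) (s : Set (Conf ℓ m)) (x : Conf ℓ m) : ENNReal :=
  @condExpKernel (Conf ℓ m) MeasurableSpace.pi inferInstance μ inferInstance 𝒞 x s

/-- Conditional information `I_μ(ℬ|𝒞)(x) = −log μ^𝒞([x]_ℬ | x)`, where the atom `[x]_ℬ`
of the sub-σ-algebra `ℬ` is supplied explicitly. -/
noncomputable def condInfo {ℓ m : ℕ} (μ : Measure (Conf ℓ m)) [IsFiniteMeasure μ]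
    (𝒞 : MeasurableSpace (Conf ℓ m)) (atomB : Set (Conf ℓ m)) (x : Conf ℓ m) : ℝ :=
  - Real.log ((condProb μ 𝒞 atomB x).toReal)

/-- The information cocycle `J(𝒜_{p,a}, V) = I(𝒜_{p,a}|V⁻¹𝒜_{p,a}) − I(V⁻¹𝒜_{p,a}|𝒜_{p,a})`
for a measure-preserving `V` (the Radon–Nikodym term of the general definition vanishes). -/
noncomputable def Jcoc {ℓ m : ℕ} (a : Fin ℓ) (μ : Measure (Conf ℓ m)) [IsFiniteMeasure μ]
    (V : Conf ℓ m → Conf ℓ m) (x : Conf ℓ m) : ℝ :=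
  condInfo μ (MeasurableSpace.comap V (pastAlg a)) (atomOn (Wa a) x) x
    - condInfo μ (pastAlg a) (V ⁻¹' atomOn (Wa a) (V x)) x

/-- The shift by `g` as a bijection of the configuration space. -/
def shiftEquiv {ℓ m : ℕ} (g : FG ℓ) : Equiv.Perm (Conf ℓ m) where
  toFun := shift g
  invFun := shift g⁻¹
  left_inv x := by funext h; simp [shift, mul_assoc]
  right_inv x := by funext h; simp [shift, mul_assoc]

/-- A locally finite measure-preserving measurable bijection of `(X_p, μ)`. -/
def IsLocallyFiniteMP {ℓ m : ℕ} (μ : Measure (Conf ℓ m)) (V : Equiv.Perm (Conf ℓ m)) : Prop :=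
  Measurable ⇑V ∧ Measurable ⇑V.symm ∧ MeasurePreserving ⇑V μ μ ∧
    ∀ᵐ x ∂μ, {g : FG ℓ | V x g ≠ x g}.Finite

/-- The group `G_p` generated by the shifts together with the locally finite
measure-preserving bijections. -/
def Gp {ℓ m : ℕ} (μ : Measure (Conf ℓ m)) : Subgroup (Equiv.Perm (Conf ℓ m)) :=
  Subgroup.closure ({V | ∃ g : FG ℓ, V = shiftEquiv g} ∪ {V | IsLocallyFiniteMP μ V})

/-- The cylinder set where the coordinates on `S` are fixed to the values of `η`. -/
def cylOn {ℓ m : ℕ} (S : Set (FG ℓ)) (η : FG ℓ → Fin m) : Set (Conf ℓ m) :=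
  {x | ∀ g ∈ S, x g = η g}

/-- `H_C^+`: locally finite m.p. bijections fixing all coordinates in `B(N) ∪ (F_ℓ ∖ W_a)`. -/
def HCplus {ℓ m : ℕ} (μ : Measure (Conf ℓ m)) (a : Fin ℓ) (N : ℕ) :
    Set (Equiv.Perm (Conf ℓ m)) :=
  {h | IsLocallyFiniteMP μ h ∧ ∀ᵐ x ∂μ, ∀ g ∈ ball ℓ N ∪ (Wa a)ᶜ, h x g = x g}

/-- `H_C^-`: locally finite m.p. bijections fixing all coordinates in `W_a ∪ B(N)`. -/
def HCminus {ℓ m : ℕ} (μ : Measure (Conf ℓ m)) (a : Fin ℓ) (N : ℕ) :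
    Set (Equiv.Perm (Conf ℓ m)) :=
  {h | IsLocallyFiniteMP μ h ∧ ∀ᵐ x ∂μ, ∀ g ∈ Wa a ∪ ball ℓ N, h x g = x g}

/-- The normalized measure `μ_C(A) = μ(A)/μ(C)` (real-valued). -/
noncomputable def relMeas {ℓ m : ℕ} (μ : Measure (Conf ℓ m)) (C A : Set (Conf ℓ m)) : ℝ :=
  (μ A).toReal / (μ C).toReal

/-- The set where `m_φ(x) ≤ M`. -/
def mphiLe {ℓ m n : ℕ} (φ : Conf ℓ m → Conf ℓ n) (a : Fin ℓ) (M : ℕ) : Set (Conf ℓ m) :=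
  {x | ∀ g ∈ Wa a, rphi φ (shift g⁻¹ x) ≤ wl g + M}

/-- The set where `a_φ(x) ≤ M`. -/
def aphiLe {ℓ m n : ℕ} (φ : Conf ℓ m → Conf ℓ n) (a : Fin ℓ) (M : ℕ) : Set (Conf ℓ m) :=
  {x | ∀ g ∉ Wa a, rphi φ (shift g⁻¹ x) ≤ wl g + M}

/-- The set `D = C ∩ {x : m_φ(x) ≤ M, a_φ(x) ≤ M}` for the cylinder `C` over `B(M)`
determined by `η`. -/
def Dset {ℓ m n : ℕ} (φ : Conf ℓ m → Conf ℓ n) (a : Fin ℓ) (M : ℕ) (η : FG ℓ → Fin m) :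
    Set (Conf ℓ m) :=
  cylOn (ball ℓ M) η ∩ (mphiLe φ a M ∩ aphiLe φ a M)

/-- The coboundary equation `J(𝒜_{p,a}, V) = J(𝒜_{q,a}, φVφ⁻¹)∘φ + f∘V − f` a.e.,
for every `V ∈ G_p`. -/
def CocycleEq {ℓ m n : ℕ} (a : Fin ℓ) (μp : Measure (Conf ℓ m)) (μq : Measure (Conf ℓ n))
    [IsFiniteMeasure μp] [IsFiniteMeasure μq] (φ : Conf ℓ m → Conf ℓ n)
    (ψ : Conf ℓ n → Conf ℓ m) (f : Conf ℓ m → ℝ) : Prop :=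
  ∀ V ∈ Gp μp, ∀ᵐ x ∂μp,
    Jcoc a μp (⇑V) x = Jcoc a μq (φ ∘ ⇑V ∘ ψ) (φ x) + f (V x) - f x

/-- Tail property: every point obtained from a point of `D ∖ E` by altering coordinates only
at `a^k` for `−M−n < k < −M` (or only at `a^k` for `M < k < M+n`) lies in `A`. -/
def TailProp {ℓ m : ℕ} (a : Fin ℓ) (M : ℕ) (D E A : Set (Conf ℓ m)) : Prop :=
  ∀ x ∈ D \ E, ∀ n : ℕ, ∀ x' : Conf ℓ m,
    ((∀ g : FG ℓ,
        (¬ ∃ k : ℤ, -(M : ℤ) - (n : ℤ) < k ∧ k < -(M : ℤ) ∧ g = (FreeGroup.of a) ^ k) →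
        x' g = x g) ∨
     (∀ g : FG ℓ,
        (¬ ∃ k : ℤ, (M : ℤ) < k ∧ k < (M : ℤ) + (n : ℤ) ∧ g = (FreeGroup.of a) ^ k) →
        x' g = x g)) →
    x' ∈ A


private lemma tendsto_ratio_powsum (M : ℝ) (hM : 0 < M) :
    ∀ (u : Multiset ℝ), (∀ x ∈ u, 0 ≤ x ∧ x ≤ M) →
    Tendsto (fun r : ℕ => (u.map (fun x => (x / M) ^ r)).sum) atTop
      (nhds ((u.count M : ℝ))) := by
  classical
  intro u
  induction u using Multiset.induction with
  | empty => simp [tendsto_const_nhds]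
  | cons a u ih =>
    intro hu
    have ha := hu a (Multiset.mem_cons_self a u)
    have h' := ih (fun x hx => hu x (Multiset.mem_cons_of_mem hx))
    simp only [Multiset.map_cons, Multiset.sum_cons, Multiset.count_cons]
    push_cast
    rcases eq_or_ne M a with rfl | hne
    · simp only [if_pos rfl, div_self hM.ne']
      simpa [one_pow, add_comm] using (tendsto_const_nhds (x := (1:ℝ))).add h'
    · have hlt : a / M < 1 := (div_lt_one hM).2 (lt_of_le_of_ne ha.2 (Ne.symm hne))
      have h0 : Tendsto (fun r : ℕ => (a / M) ^ r) atTop (nhds 0) :=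
        tendsto_pow_atTop_nhds_zero_of_lt_one (div_nonneg ha.1 hM.le) hlt
      simpa [if_neg hne] using h0.add h'

private lemma sum_map_div_pow (M : ℝ) (u : Multiset ℝ) (r : ℕ) :
    (u.map fun x => (x / M) ^ r).sum = (u.map (fun x => x ^ r)).sum / M ^ r := by
  induction u using Multiset.induction with
  | empty => simp
  | cons a u ih =>
    simp only [Multiset.map_cons, Multiset.sum_cons, div_pow] at *
    rw [ih, add_div]

private lemma multiset_eq_of_powsum_aux (N : ℕ) : ∀ (s t : Multiset ℝ), Multiset.card s ≤ N →
    (∀ x ∈ s, 0 < x) → (∀ x ∈ t, 0 < x) →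
    (∀ r : ℕ, (s.map (fun x => x ^ r)).sum = (t.map (fun x => x ^ r)).sum) → s = t := by
  classical
  induction N with
  | zero =>
    intro s t hcardN hs ht h
    have hcard : (Multiset.card s : ℝ) = Multiset.card t := by simpa using h 0
    have hs0 : s = 0 := Multiset.card_eq_zero.mp (Nat.le_zero.mp hcardN)
    have ht0 : t = 0 := by
      rw [hs0] at hcard; exact Multiset.card_eq_zero.mp (by exact_mod_cast hcard.symm)
    rw [hs0, ht0]
  | succ N ih =>
    intro s t hcardN hs ht h
    have hcard : (Multiset.card s : ℝ) = Multiset.card t := by simpa using h 0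
    rcases eq_or_ne s 0 with rfl | hsne
    · have : t = 0 := Multiset.card_eq_zero.mp (by simpa using hcard.symm)
      rw [this]
    · have hFne : (s + t).toFinset.Nonempty := by
        obtain ⟨a, ha⟩ := Multiset.exists_mem_of_ne_zero hsne
        exact ⟨a, Multiset.mem_toFinset.2 (Multiset.mem_add.2 (Or.inl ha))⟩
      set M := (s + t).toFinset.max' hFne with hMdef
      have hMmem : M ∈ s + t := Multiset.mem_toFinset.1 ((s + t).toFinset.max'_mem hFne)
      have hMpos : 0 < M := by
        rcases Multiset.mem_add.1 hMmem with hm | hm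
        · exact hs M hm
        · exact ht M hm
      have hle : ∀ x ∈ s + t, x ≤ M :=
        fun x hx => Finset.le_max' _ x (Multiset.mem_toFinset.2 hx)
      have hsb : ∀ x ∈ s, 0 ≤ x ∧ x ≤ M :=
        fun x hx => ⟨(hs x hx).le, hle x (Multiset.mem_add.2 (Or.inl hx))⟩
      have htb : ∀ x ∈ t, 0 ≤ x ∧ x ≤ M :=
        fun x hx => ⟨(ht x hx).le, hle x (Multiset.mem_add.2 (Or.inr hx))⟩
      have hslim := tendsto_ratio_powsum M hMpos s hsb
      have htlim := tendsto_ratio_powsum M hMpos t htb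
      have hfe : (fun r : ℕ => (s.map (fun x => (x / M) ^ r)).sum)
          = fun r : ℕ => (t.map (fun x => (x / M) ^ r)).sum := by
        funext r
        rw [sum_map_div_pow, sum_map_div_pow, h r]
      have hcnt : (s.count M : ℝ) = t.count M :=
        tendsto_nhds_unique hslim (hfe ▸ htlim)
      have hcnt' : s.count M = t.count M := by exact_mod_cast hcnt
      have hMs : M ∈ s := by
        rcases Multiset.mem_add.1 hMmem with hm | hm
        · exact hm
        · exact Multiset.count_pos.1 (hcnt' ▸ Multiset.count_pos.2 hm)
      set k := s.count M with hk
      have hk1 : 1 ≤ k := Multiset.count_pos.2 hMs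
      have hsplit : ∀ u : Multiset ℝ,
          u = u.filter (fun x => ¬ x = M) + Multiset.replicate (u.count M) M := by
        intro u
        conv_lhs => rw [← Multiset.filter_add_not (fun x => x = M) u]
        rw [Multiset.filter_eq', add_comm]
      set s' := s.filter (fun x => ¬ x = M) with hs'
      set t' := t.filter (fun x => ¬ x = M) with ht'
      have hss : s = s' + Multiset.replicate k M := hsplit s
      have hts : t = t' + Multiset.replicate k M := by
        conv_lhs => rw [hsplit t]
        rw [← hcnt']
      have hps : ∀ r : ℕ, (s'.map (fun x => x ^ r)).sum = (t'.map (fun x => x ^ r)).sum := by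
        intro r
        have h1 := h r
        rw [hss, hts] at h1
        simpa [Multiset.map_add, Multiset.sum_add, Multiset.map_replicate,
          Multiset.sum_replicate] using h1
      have hcard' : Multiset.card s' ≤ N := by
        have := congrArg Multiset.card hss
        simp only [Multiset.card_add, Multiset.card_replicate] at this
        omega
      have heq := ih s' t' hcard'
        (fun x hx => hs x (Multiset.mem_of_mem_filter hx))
        (fun x hx => ht x (Multiset.mem_of_mem_filter hx)) hps
      rw [hss, hts, heq]

private lemma multiset_eq_of_powsum (s t : Multiset ℝ)
    (hs : ∀ x ∈ s, 0 < x) (ht : ∀ x ∈ t, 0 < x)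
    (h : ∀ r : ℕ, (s.map (fun x => x ^ r)).sum = (t.map (fun x => x ^ r)).sum) : s = t :=
  multiset_eq_of_powsum_aux (Multiset.card s) s t le_rfl hs ht h

theorem perm_of_power_sums_eq
    {m n : ℕ} (P : Fin m → ℝ) (Q : Fin n → ℝ)
    (hP : ∀ i, 0 < P i) (hQ : ∀ j, 0 < Q j)
    (hPsum : ∑ i, P i = 1) (hQsum : ∑ j, Q j = 1)
    (h : ∀ t : ℝ, ∑ i, P i ^ t = ∑ j, Q j ^ t) :
    m = n ∧ ∃ e : Fin m ≃ Fin n, ∀ j : Fin n, P (e.symm j) = Q j := by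
  classical
  have key : (Finset.univ.val.map P : Multiset ℝ) = Finset.univ.val.map Q := by
    apply multiset_eq_of_powsum
    · rintro x hx
      obtain ⟨i, _, rfl⟩ := Multiset.mem_map.1 hx
      exact hP i
    · rintro x hx
      obtain ⟨j, _, rfl⟩ := Multiset.mem_map.1 hx
      exact hQ j
    · intro r
      have h1 := h (r : ℝ)
      simp only [Real.rpow_natCast] at h1
      rw [Multiset.map_map, Multiset.map_map]
      exact h1
  have hmn : m = n := by
    have := congrArg Multiset.card key
    simpa using this
  subst hmn
  refine ⟨rfl, ?_⟩
  have keyl : (List.ofFn P : Multiset ℝ) = (List.ofFn Q : Multiset ℝ) := by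
    have e1 : (Finset.univ.val.map P : Multiset ℝ) = ↑(List.ofFn P) := by
      simp [Fin.univ_def, List.ofFn_eq_map]
    have e2 : (Finset.univ.val.map Q : Multiset ℝ) = ↑(List.ofFn Q) := by
      simp [Fin.univ_def, List.ofFn_eq_map]
    rw [← e1, ← e2, key]
  set σ := Tuple.sort P with hσ
  set τ := Tuple.sort Q with hτ
  have hperm : List.Perm (List.ofFn (P ∘ σ)) (List.ofFn (Q ∘ τ)) :=
    ((σ.ofFn_comp_perm P).trans (Multiset.coe_eq_coe.1 keyl)).trans (τ.ofFn_comp_perm Q).symm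
  have hsorted : List.ofFn (P ∘ σ) = List.ofFn (Q ∘ τ) :=
    List.Perm.eq_of_sortedLE (Tuple.monotone_sort P).sortedLE_ofFn
      (Tuple.monotone_sort Q).sortedLE_ofFn hperm
  have hfun : P ∘ σ = Q ∘ τ := List.ofFn_injective hsorted
  refine ⟨(τ.symm.trans σ).symm, fun j => ?_⟩
  have : P (σ (τ.symm j)) = Q (τ (τ.symm j)) := congrFun hfun (τ.symm j)
  simpa using this

end Finitary
end

section
/- Let φ : X_p → X_q be a finitary isomorphism with finite expectation, let M ∈ ℕ and let C ⊆ X_p be a cylinder set obtained by fixing the coordinates on the ball B(M) such that D = C ∩ {x : m_φ(x) ≤ M and a_φ(x) ≤ M} has positive μ_p-measure. Let A ⊆ X_p be a measurable set with the property that there is a μ_p-null set E ⊆ D such that for every x ∈ D ∖ E, every integer n ≥ 0, and every x' ∈ X_p with x'_g = x_g for all g ∉ {a^k : −M−n < k < −M} (or with x'_g = x_g for all g ∉ {a^k : M < k < M+n}), one has x' ∈ A. Then there exists t₀ > 0 such that for every t > t₀: limsup_{n→∞} ( ∫_{A ∩ a^n·A} ∏_{i=0}^{n−1} (P_{x_{a^i}})^{−t}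 dμ_p(x) )^{1/n} = lim_{n→∞} ( ∫_{X_p} ∏_{i=0}^{n−1} (P_{x_{a^i}})^{−t} dμ_p(x) )^{1/n} = P_1^{1−t} + ⋯ + P_m^{1−t}, where a^n·A = {a^n·x : x ∈ A} and the integrand is exp(t·Σ_{i=0}^{n−1} −log P_{x_{a^i}}), i.e. exp(t·J(𝒜_{p,a}, a^{−n})) in the paper's notation; the common value equals β_{p,a}(1−t). -/
open MeasureTheory ProbabilityTheory Filter

namespace Finitary

/-! ### Auxiliary machinery -/

section Cylinders

variable {ι : Type*} {m : ℕ}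

/-- Cylinder sets in a product of copies of `Fin m`. -/
def cylSet (T : Finset ι) (σ : ι → Fin m) : Set (ι → Fin m) := {y | ∀ g ∈ T, y g = σ g}

/-- The collection of cylinder sets. -/
def cylPi (ι : Type*) (m : ℕ) : Set (Set (ι → Fin m)) :=
  {C | ∃ (T : Finset ι) (σ : ι → Fin m), C = cylSet T σ}

lemma measurableSet_cylSet (T : Finset ι) (σ : ι → Fin m) : MeasurableSet (cylSet T σ) := by
  have h : cylSet T σ = ⋂ g ∈ (T : Set ι), (fun y : ι → Fin m => y g) ⁻¹' {σ g} := by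
    ext y; simp [cylSet]
  rw [h]
  exact MeasurableSet.biInter T.countable_toSet
    (fun g _ => (measurable_pi_apply g) (measurableSet_singleton _))

lemma isPiSystem_cylPi : IsPiSystem (cylPi ι m) := by
  classical
  rintro C1 ⟨T1, σ1, rfl⟩ C2 ⟨T2, σ2, rfl⟩ ⟨x, hx1, hx2⟩
  refine ⟨T1 ∪ T2, x, ?_⟩
  ext y
  constructor
  · rintro ⟨h1, h2⟩ g hg
    rcases Finset.mem_union.1 hg with hg | hg
    · exact (h1 g hg).trans (hx1 g hg).symm
    · exact (h2 g hg).trans (hx2 g hg).symm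
  · intro h
    exact ⟨fun g hg => (h g (Finset.mem_union_left _ hg)).trans (hx1 g hg),
           fun g hg => (h g (Finset.mem_union_right _ hg)).trans (hx2 g hg)⟩

lemma pi_eq_generateFrom_cylPi :
    (MeasurableSpace.pi : MeasurableSpace (ι → Fin m))
      = MeasurableSpace.generateFrom (cylPi ι m) := by
  refine le_antisymm ?_ (MeasurableSpace.generateFrom_le ?_)
  · refine iSup_le fun g => MeasurableSpace.le_def.mpr fun s hs => ?_
    obtain ⟨t, -, rfl⟩ := MeasurableSpace.measurableSet_comap.1 hs
    have h : (fun y : ι → Fin m => y g) ⁻¹' t = ⋃ v ∈ t, cylSet {g} (fun _ => v) := by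
      ext y
      simp only [Set.mem_preimage, Set.mem_iUnion, cylSet, Finset.mem_singleton,
        Set.mem_setOf_eq]
      constructor
      · intro h; exact ⟨y g, h, fun g' hg' => by rw [hg']⟩
      · rintro ⟨v, hv, h⟩; rw [h g rfl]; exact hv
    rw [h]
    exact MeasurableSet.biUnion t.to_countable
      (fun v _ => MeasurableSpace.measurableSet_generateFrom ⟨{g}, fun _ => v, rfl⟩)
  · rintro C ⟨T, σ, rfl⟩
    exact measurableSet_cylSet T σ

end Cylinders


section BernoulliAux

variable {ℓ m : ℕ} {P : Fin m → ℝ} {μ : Measure (Conf ℓ m)}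

lemma IsBernoulli.cyl (hμ : IsBernoulli P μ) (T : Finset (FG ℓ)) (σ : FG ℓ → Fin m) :
    μ (cylSet T σ) = ENNReal.ofReal (∏ g ∈ T, P (σ g)) := by
  haveI := hμ.1
  have h := hμ.2 T σ
  have hne : μ (cylSet T σ) ≠ ⊤ := measure_ne_top μ _
  rw [← h]
  exact (ENNReal.ofReal_toReal hne).symm

/-- Invariance of a set under changing finitely many coordinates. -/
lemma mem_of_update_invariant (S : Set (Conf ℓ m)) (T : Finset (FG ℓ))
    (hinv : ∀ g ∈ T, ∀ x v, Function.update x g v ∈ S ↔ x ∈ S)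
    (c : FG ℓ → Fin m) (x : Conf ℓ m) :
    (fun h => if h ∈ T then c h else x h) ∈ S ↔ x ∈ S := by
  classical
  induction T using Finset.induction_on generalizing x with
  | empty => simp only [Finset.notMem_empty, if_false]
  | @insert g T hg IH =>
    have hupd : (fun h => if h ∈ insert g T then c h else x h)
        = Function.update (fun h => if h ∈ T then c h else x h) g (c g) := by
      funext h
      by_cases hh : h = g
      · subst hh; simp [Function.update_self]
      · rw [Function.update_of_ne hh]
        simp [Finset.mem_insert, hh]
    rw [hupd, hinv g (Finset.mem_insert_self g T) _ (c g)]
    exact IH (fun g' hg' x v => hinv g' (Finset.mem_insert_of_mem hg') x v) x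

/-- Deleting the coordinates in `T`. -/
def delC (T : Finset (FG ℓ)) : Conf ℓ m → ({h : FG ℓ // h ∉ T} → Fin m) := fun x h => x h.1

lemma measurable_delC (T : Finset (FG ℓ)) : Measurable (delC (m := m) T) :=
  measurable_pi_lambda _ fun h => measurable_pi_apply _

/-- Filling back the coordinates in `T` with a default value. -/
def insC (T : Finset (FG ℓ)) (v₀ : Fin m) : ({h : FG ℓ // h ∉ T} → Fin m) → Conf ℓ m :=
  fun y h => if hh : h ∉ T then y ⟨h, hh⟩ else v₀

lemma measurable_insC (T : Finset (FG ℓ)) (v₀ : Fin m) : Measurable (insC T v₀) := by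
  refine measurable_pi_lambda _ fun h => ?_
  by_cases hh : h ∉ T
  · simp only [insC, dif_pos hh]; exact measurable_pi_apply _
  · simp only [insC, dif_neg hh]; exact measurable_const

lemma delC_preimage_cyl (T : Finset (FG ℓ)) (T' : Finset {h : FG ℓ // h ∉ T})
    (σ' : {h : FG ℓ // h ∉ T} → Fin m) (σb : FG ℓ → Fin m) :
    delC (m := m) T ⁻¹' cylSet T' σ'
      = cylSet (T'.image Subtype.val) (fun g => if hg : g ∉ T then σ' ⟨g, hg⟩ else σb g) := by
  classical
  ext x
  constructor
  · intro hx g hg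
    rcases Finset.mem_image.1 hg with ⟨h', hh', rfl⟩
    dsimp only
    rw [dif_pos h'.2]
    exact hx h' hh'
  · intro hx h' hh'
    have h := hx h'.1 (Finset.mem_image_of_mem _ hh')
    dsimp only at h
    rwa [dif_pos h'.2] at h

/-- Key independence lemma: the measure of the intersection of a set invariant under
updates on `T` with a cylinder over `T` factorizes. -/
lemma meas_inter_cylSet (hμ : IsBernoulli P μ) (hP0 : ∀ i, 0 ≤ P i) [Nonempty (Fin m)]
    {S : Set (Conf ℓ m)} (hS : MeasurableSet S) (T : Finset (FG ℓ)) (σ : FG ℓ → Fin m)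
    (hinv : ∀ g ∈ T, ∀ x v, Function.update x g v ∈ S ↔ x ∈ S) :
    μ (S ∩ cylSet T σ) = ENNReal.ofReal (∏ g ∈ T, P (σ g)) * μ S := by
  classical
  haveI := hμ.1
  obtain ⟨v₀⟩ := (inferInstance : Nonempty (Fin m))
  set del := delC (m := m) T with hdel_def
  have hmdel : Measurable del := measurable_delC T
  set S₀ : Set ({h : FG ℓ // h ∉ T} → Fin m) := insC T v₀ ⁻¹' S with hS₀def
  have hS₀ : MeasurableSet S₀ := (measurable_insC T v₀) hS
  have hdelS : del ⁻¹' S₀ = S := by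
    ext x
    show insC T v₀ (del x) ∈ S ↔ x ∈ S
    have h : insC T v₀ (del x) = fun h => if h ∈ T then v₀ else x h := by
      funext h
      by_cases hh : h ∈ T
      · simp [insC, hh]
      · simp [insC, hdel_def, delC, hh]
    rw [h]
    exact mem_of_update_invariant S T hinv (fun _ => v₀) x
  have key : Measure.map del (μ.restrict (cylSet T σ))
      = ENNReal.ofReal (∏ g ∈ T, P (σ g)) • Measure.map del μ := by
    haveI : IsFiniteMeasure (Measure.map del (μ.restrict (cylSet T σ))) := by
      constructor
      rw [Measure.map_apply hmdel MeasurableSet.univ]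
      exact measure_lt_top _ _
    refine ext_of_generate_finite (cylPi _ m) pi_eq_generateFrom_cylPi isPiSystem_cylPi ?_ ?_
    · rintro C ⟨T', σ', rfl⟩
      rw [Measure.map_apply hmdel (measurableSet_cylSet _ _),
        Measure.restrict_apply (hmdel (measurableSet_cylSet _ _)),
        Measure.smul_apply, Measure.map_apply hmdel (measurableSet_cylSet _ _),
        delC_preimage_cyl T T' σ' σ]
      set σ'' : FG ℓ → Fin m := fun g => if hg : g ∉ T then σ' ⟨g, hg⟩ else σ g with hσ''
      have hdisj : Disjoint (T'.image Subtype.val) T := by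
        rw [Finset.disjoint_left]
        rintro g hg
        rcases Finset.mem_image.1 hg with ⟨h', _, rfl⟩
        exact h'.2
      have hcomb : cylSet (T'.image Subtype.val) σ'' ∩ cylSet T σ
          = cylSet (T'.image Subtype.val ∪ T) σ'' := by
        ext x
        constructor
        · rintro ⟨h1, h2⟩ g hg
          rcases Finset.mem_union.1 hg with hg | hg
          · exact h1 g hg
          · rw [h2 g hg, hσ'']
            simp [hg]
        · intro h
          refine ⟨fun g hg => h g (Finset.mem_union_left _ hg), fun g hg => ?_⟩
          have := h g (Finset.mem_union_right _ hg)
          rw [this, hσ'']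
          simp [hg]
      rw [hcomb, hμ.cyl, hμ.cyl, Finset.prod_union hdisj, smul_eq_mul]
      have hTpart : ∏ g ∈ T, P (σ'' g) = ∏ g ∈ T, P (σ g) := by
        refine Finset.prod_congr rfl fun g hg => ?_
        rw [hσ'']
        simp [hg]
      rw [hTpart, ENNReal.ofReal_mul (Finset.prod_nonneg fun g _ => hP0 _), mul_comm]
    · rw [Measure.map_apply hmdel MeasurableSet.univ, Set.preimage_univ,
        Measure.restrict_apply MeasurableSet.univ, Set.univ_inter,
        Measure.smul_apply, Measure.map_apply hmdel MeasurableSet.univ,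
        Set.preimage_univ, measure_univ, smul_eq_mul, mul_one, hμ.cyl]
  have h1 : Measure.map del (μ.restrict (cylSet T σ)) S₀ = μ (S ∩ cylSet T σ) := by
    rw [Measure.map_apply hmdel hS₀, Measure.restrict_apply (hmdel hS₀), hdelS]
  have h2 : (ENNReal.ofReal (∏ g ∈ T, P (σ g)) • Measure.map del μ) S₀
      = ENNReal.ofReal (∏ g ∈ T, P (σ g)) * μ S := by
    rw [Measure.smul_apply, smul_eq_mul, Measure.map_apply hmdel hS₀, hdelS]
  rw [← h1, key, h2]

/-- Independence of a set determined by the coordinates in `T` and a set invariant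
under updates on `T`. -/
lemma meas_inter_of_indep (hμ : IsBernoulli P μ) (hP0 : ∀ i, 0 ≤ P i) [Nonempty (Fin m)]
    {S V : Set (Conf ℓ m)} (hS : MeasurableSet S) (hV : MeasurableSet V)
    (T : Finset (FG ℓ))
    (hSinv : ∀ g ∉ T, ∀ x v, Function.update x g v ∈ S ↔ x ∈ S)
    (hVinv : ∀ g ∈ T, ∀ x v, Function.update x g v ∈ V ↔ x ∈ V) :
    μ (S ∩ V) = μ S * μ V := by
  classical
  haveI := hμ.1
  obtain ⟨v₀⟩ := (inferInstance : Nonempty (Fin m))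
  set del := delC (m := m) T with hdel_def
  have hmdel : Measurable del := measurable_delC T
  set V₀ : Set ({h : FG ℓ // h ∉ T} → Fin m) := insC T v₀ ⁻¹' V with hV₀def
  have hV₀ : MeasurableSet V₀ := (measurable_insC T v₀) hV
  have hdelV : del ⁻¹' V₀ = V := by
    ext x
    show insC T v₀ (del x) ∈ V ↔ x ∈ V
    have h : insC T v₀ (del x) = fun h => if h ∈ T then v₀ else x h := by
      funext h
      by_cases hh : h ∈ T
      · simp [insC, hh]
      · simp [insC, hdel_def, delC, hh]
    rw [h]
    exact mem_of_update_invariant V T hVinv (fun _ => v₀) x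
  have key : Measure.map del (μ.restrict S) = μ S • Measure.map del μ := by
    haveI : IsFiniteMeasure (Measure.map del (μ.restrict S)) := by
      constructor
      rw [Measure.map_apply hmdel MeasurableSet.univ]
      exact measure_lt_top _ _
    refine ext_of_generate_finite (cylPi _ m) pi_eq_generateFrom_cylPi isPiSystem_cylPi ?_ ?_
    · rintro C ⟨T', σ', rfl⟩
      rw [Measure.map_apply hmdel (measurableSet_cylSet _ _),
        Measure.restrict_apply (hmdel (measurableSet_cylSet _ _)),
        Measure.smul_apply, Measure.map_apply hmdel (measurableSet_cylSet _ _),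
        delC_preimage_cyl T T' σ' (fun _ => v₀), Set.inter_comm, smul_eq_mul,
        meas_inter_cylSet hμ hP0 hS _ _ ?_, hμ.cyl, mul_comm]
      intro g hg
      rcases Finset.mem_image.1 hg with ⟨h', _, rfl⟩
      exact hSinv h'.1 h'.2
    · rw [Measure.map_apply hmdel MeasurableSet.univ, Set.preimage_univ,
        Measure.restrict_apply MeasurableSet.univ, Set.univ_inter,
        Measure.smul_apply, Measure.map_apply hmdel MeasurableSet.univ,
        Set.preimage_univ, measure_univ, smul_eq_mul, mul_one]
  have h1 : Measure.map del (μ.restrict S) V₀ = μ (S ∩ V) := by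
    rw [Measure.map_apply hmdel hV₀, Measure.restrict_apply (hmdel hV₀), hdelV,
      Set.inter_comm]
  have h2 : (μ S • Measure.map del μ) V₀ = μ S * μ V := by
    rw [Measure.smul_apply, smul_eq_mul, Measure.map_apply hmdel hV₀, hdelV]
  rw [← h1, key, h2]

end BernoulliAux


section MasterIntegral

variable {ℓ m : ℕ} {P : Fin m → ℝ} {μ : Measure (Conf ℓ m)}

lemma measurable_prod_coord (hfun : Fin m → ℝ) (T : Finset (FG ℓ)) :
    Measurable (fun x : Conf ℓ m => ∏ g ∈ T, hfun (x g)) :=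
  Finset.measurable_prod _ fun g _ =>
    (measurable_of_countable hfun).comp (measurable_pi_apply g)

lemma integrable_prod_coord [IsFiniteMeasure μ] (hfun : Fin m → ℝ) (T : Finset (FG ℓ)) :
    Integrable (fun x : Conf ℓ m => ∏ g ∈ T, hfun (x g)) μ := by
  refine Integrable.mono' (integrable_const ((∑ v, |hfun v|) ^ T.card))
    (measurable_prod_coord hfun T).aestronglyMeasurable (ae_of_all μ fun x => ?_)
  rw [Real.norm_eq_abs, Finset.abs_prod]
  calc ∏ g ∈ T, |hfun (x g)| ≤ ∏ _g ∈ T, (∑ v, |hfun v|) := by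
        refine Finset.prod_le_prod (fun g _ => abs_nonneg _) (fun g _ => ?_)
        exact Finset.single_le_sum (f := fun v => |hfun v|) (fun v _ => abs_nonneg _)
          (Finset.mem_univ _)
    _ = (∑ v, |hfun v|) ^ T.card := Finset.prod_const _

/-- Master integral computation: the integral over a set invariant under updates on `T`
of a product of functions of the coordinates on `T` factorizes. -/
lemma master_integral (hμ : IsBernoulli P μ) (hP0 : ∀ i, 0 ≤ P i) [Nonempty (Fin m)]
    (hfun : Fin m → ℝ) (T : Finset (FG ℓ)) :
    ∀ (S : Set (Conf ℓ m)), MeasurableSet S →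
    (∀ g ∈ T, ∀ x v, Function.update x g v ∈ S ↔ x ∈ S) →
    ∫ x in S, ∏ g ∈ T, hfun (x g) ∂μ
      = (μ S).toReal * (∑ v, hfun v * P v) ^ T.card := by
  classical
  haveI := hμ.1
  induction T using Finset.induction_on with
  | empty =>
    intro S hS _
    simp [setIntegral_const, Measure.real]
  | @insert g₀ T hg₀ IH =>
    intro S hS hinv
    have hev : ∀ v : Fin m, MeasurableSet {x : Conf ℓ m | x g₀ = v} := by
      intro v
      have h : {x : Conf ℓ m | x g₀ = v} = (fun x : Conf ℓ m => x g₀) ⁻¹' {v} := rfl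
      rw [h]
      exact (measurable_pi_apply g₀) (measurableSet_singleton v)
    have hmeas_v : ∀ v : Fin m, MeasurableSet (S ∩ {x | x g₀ = v}) := fun v =>
      hS.inter (hev v)
    have hparts : S = ⋃ v ∈ (Finset.univ : Finset (Fin m)), (S ∩ {x | x g₀ = v}) := by
      ext x
      simp only [Set.mem_iUnion, Set.mem_inter_iff, Set.mem_setOf_eq, Finset.mem_univ,
        exists_prop, true_and]
      exact ⟨fun hx => ⟨x g₀, hx, rfl⟩, fun ⟨v, hx, _⟩ => hx⟩
    have hint : Integrable (fun x : Conf ℓ m => ∏ g ∈ insert g₀ T, hfun (x g)) μ :=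
      integrable_prod_coord hfun _
    have step1 : ∫ x in S, ∏ g ∈ insert g₀ T, hfun (x g) ∂μ
        = ∑ v : Fin m, ∫ x in S ∩ {x | x g₀ = v}, ∏ g ∈ insert g₀ T, hfun (x g) ∂μ := by
      conv_lhs => rw [hparts]
      exact integral_biUnion_finset Finset.univ (fun v _ => hmeas_v v)
        (fun v _ w _ hvw => Set.disjoint_left.2 fun x hx hx' => hvw (hx.2.symm.trans hx'.2))
        (fun v _ => hint.integrableOn)
    have hcylv : ∀ v : Fin m, cylSet {g₀} (fun _ => v) = {x : Conf ℓ m | x g₀ = v} := by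
      intro v
      ext x
      simp [cylSet]
    have hmuv : ∀ v : Fin m, (μ (S ∩ {x | x g₀ = v})).toReal = P v * (μ S).toReal := by
      intro v
      rw [← hcylv v, meas_inter_cylSet hμ hP0 hS {g₀} (fun _ => v)
        (fun g hg x w => by
          rw [Finset.mem_singleton] at hg
          exact hinv g (hg ▸ Finset.mem_insert_self g₀ T) x w),
        ENNReal.toReal_mul, ENNReal.toReal_ofReal (by simpa using hP0 v)]
      simp
    have step2 : ∀ v : Fin m, ∫ x in S ∩ {x | x g₀ = v}, ∏ g ∈ insert g₀ T, hfun (x g) ∂μ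
        = hfun v * (P v * (μ S).toReal) * (∑ w, hfun w * P w) ^ T.card := by
      intro v
      have hcongr : ∫ x in S ∩ {x | x g₀ = v}, ∏ g ∈ insert g₀ T, hfun (x g) ∂μ
          = ∫ x in S ∩ {x | x g₀ = v}, hfun v * ∏ g ∈ T, hfun (x g) ∂μ := by
        refine setIntegral_congr_fun (hmeas_v v) fun x hx => ?_
        rw [Finset.prod_insert hg₀, hx.2]
      have hinv' : ∀ g ∈ T, ∀ x w,
          Function.update x g w ∈ S ∩ {x | x g₀ = v} ↔ x ∈ S ∩ {x | x g₀ = v} := by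
        intro g hg x w
        have hgg₀ : g ≠ g₀ := fun hgg => hg₀ (hgg ▸ hg)
        constructor
        · rintro ⟨h1, h2⟩
          refine ⟨(hinv g (Finset.mem_insert_of_mem hg) x w).1 h1, ?_⟩
          rwa [Set.mem_setOf_eq, Function.update_of_ne hgg₀.symm] at h2
        · rintro ⟨h1, h2⟩
          refine ⟨(hinv g (Finset.mem_insert_of_mem hg) x w).2 h1, ?_⟩
          rwa [Set.mem_setOf_eq, Function.update_of_ne hgg₀.symm]
      rw [hcongr, integral_const_mul _ _,
        IH (S ∩ {x | x g₀ = v}) (hmeas_v v) hinv', hmuv v]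
      ring
    rw [step1]
    simp only [step2]
    rw [Finset.card_insert_of_notMem hg₀, pow_succ]
    have : ∀ v : Fin m, hfun v * (P v * (μ S).toReal) * (∑ w, hfun w * P w) ^ T.card
        = (hfun v * P v) * ((μ S).toReal * (∑ w, hfun w * P w) ^ T.card) := by
      intro v; ring
    simp only [this]
    rw [← Finset.sum_mul]
    ring

end MasterIntegral


section Approx

variable {ℓ m : ℕ} {P : Fin m → ℝ} {μ : Measure (Conf ℓ m)}

/-- A set depending on finitely many coordinates. -/
def IsFinitaryS (U : Set (Conf ℓ m)) : Prop :=
  ∃ T : Finset (FG ℓ), ∀ x y : Conf ℓ m, (∀ g ∈ T, x g = y g) → (x ∈ U ↔ y ∈ U)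

lemma IsFinitaryS.compl {U : Set (Conf ℓ m)} (h : IsFinitaryS U) : IsFinitaryS Uᶜ := by
  obtain ⟨T, hT⟩ := h
  exact ⟨T, fun x y hxy => not_congr (hT x y hxy)⟩

lemma IsFinitaryS.union {U V : Set (Conf ℓ m)} (hU : IsFinitaryS U) (hV : IsFinitaryS V) :
    IsFinitaryS (U ∪ V) := by
  classical
  obtain ⟨T, hT⟩ := hU
  obtain ⟨T', hT'⟩ := hV
  refine ⟨T ∪ T', fun x y hxy => ?_⟩
  rw [Set.mem_union, Set.mem_union,
    hT x y (fun g hg => hxy g (Finset.mem_union_left _ hg)),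
    hT' x y (fun g hg => hxy g (Finset.mem_union_right _ hg))]

lemma IsFinitaryS.empty : IsFinitaryS (∅ : Set (Conf ℓ m)) :=
  ⟨∅, fun _ _ _ => Iff.rfl⟩

lemma IsFinitaryS.biUnion_range {U : ℕ → Set (Conf ℓ m)} (h : ∀ i, IsFinitaryS (U i))
    (k : ℕ) : IsFinitaryS (⋃ i ∈ Finset.range k, U i) := by
  induction k with
  | zero => simpa using IsFinitaryS.empty
  | succ k IH =>
    have : (⋃ i ∈ Finset.range (k+1), U i) = (⋃ i ∈ Finset.range k, U i) ∪ U k := by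
      ext x
      simp only [Set.mem_iUnion, Set.mem_union, Finset.mem_range]
      constructor
      · rintro ⟨i, hi, hx⟩
        rcases Nat.lt_succ_iff_lt_or_eq.1 hi with hi | rfl
        · exact Or.inl ⟨i, hi, hx⟩
        · exact Or.inr hx
      · rintro (⟨i, hi, hx⟩ | hx)
        · exact ⟨i, Nat.lt_succ_of_lt hi, hx⟩
        · exact ⟨k, Nat.lt_succ_self k, hx⟩
    rw [this]
    exact IH.union (h k)

lemma IsFinitaryS.update_inv {U : Set (Conf ℓ m)} {T : Finset (FG ℓ)}
    (hT : ∀ x y : Conf ℓ m, (∀ g ∈ T, x g = y g) → (x ∈ U ↔ y ∈ U)) :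
    ∀ g ∉ T, ∀ x v, Function.update x g v ∈ U ↔ x ∈ U := by
  intro g hg x v
  refine hT _ _ fun g' hg' => ?_
  exact Function.update_of_ne (fun (hgg : g' = g) => hg (hgg ▸ hg')) _ _

/-- Any measurable set can be approximated by finitary sets. -/
lemma exists_finitary_approx (hμ : IsBernoulli P μ) {K : Set (Conf ℓ m)}
    (hK : MeasurableSet K) (ε : ENNReal) (hε : 0 < ε) :
    ∃ U : Set (Conf ℓ m), IsFinitaryS U ∧ MeasurableSet U ∧ μ (symmDiff K U) ≤ ε := by
  haveI := hμ.1
  revert ε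
  refine MeasurableSpace.induction_on_inter (C := fun K _ => ∀ ε : ENNReal, 0 < ε →
      ∃ U : Set (Conf ℓ m), IsFinitaryS U ∧ MeasurableSet U ∧ μ (symmDiff K U) ≤ ε)
    pi_eq_generateFrom_cylPi isPiSystem_cylPi ?_ ?_ ?_ ?_ _ hK
  · intro ε hε
    exact ⟨∅, IsFinitaryS.empty, MeasurableSet.empty, by simp⟩
  · rintro C ⟨T, σ, rfl⟩ ε hε
    refine ⟨cylSet T σ, ⟨T, fun x y hxy => ?_⟩, measurableSet_cylSet T σ, by simp⟩
    constructor
    · intro hx g hg; rw [← hxy g hg]; exact hx g hg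
    · intro hy g hg; rw [hxy g hg]; exact hy g hg
  · rintro K hKm IH ε hε
    obtain ⟨U, hUf, hUm, hU⟩ := IH ε hε
    refine ⟨Uᶜ, hUf.compl, hUm.compl, ?_⟩
    rwa [compl_symmDiff_compl]
  · rintro f hdisj hfm IH ε hε
    rcases eq_or_ne ε ⊤ with rfl | hεtop
    · exact ⟨∅, IsFinitaryS.empty, MeasurableSet.empty, le_top⟩
    have htsum : ∑' i, μ (f i) ≠ ⊤ := by
      rw [← measure_iUnion hdisj hfm]
      exact measure_ne_top μ _
    have htail := ENNReal.tendsto_sum_nat_add (fun i => μ (f i)) htsum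
    have hε2 : (0 : ENNReal) < ε / 2 := ENNReal.half_pos hε.ne'
    obtain ⟨k₀, hk₀⟩ := (htail.eventually_lt_const hε2).exists
    set ε₁ : ENNReal := ε / 2 / (k₀ + 1) with hε₁def
    have hε₁ : 0 < ε₁ := ENNReal.div_pos hε2.ne' (by simp)
    choose U hUf hUm hU using fun i => IH i ε₁ hε₁
    refine ⟨⋃ i ∈ Finset.range k₀, U i, IsFinitaryS.biUnion_range hUf k₀,
      Finset.measurableSet_biUnion _ (fun i _ => hUm i), ?_⟩
    have hsub : symmDiff (⋃ i, f i) (⋃ i ∈ Finset.range k₀, U i)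
        ⊆ (⋃ i ∈ Finset.range k₀, symmDiff (f i) (U i)) ∪ ⋃ i, f (i + k₀) := by
      intro x hx
      rcases Set.mem_symmDiff.1 hx with ⟨hx1, hx2⟩ | ⟨hx1, hx2⟩
      · obtain ⟨i, hi⟩ := Set.mem_iUnion.1 hx1
        by_cases hik : i < k₀
        · left
          refine Set.mem_biUnion (Finset.mem_range.2 hik) ?_
          exact Set.mem_symmDiff.2 (Or.inl ⟨hi, fun hxU =>
            hx2 (Set.mem_biUnion (Finset.mem_range.2 hik) hxU)⟩)
        · right
          refine Set.mem_iUnion.2 ⟨i - k₀, ?_⟩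
          rwa [Nat.sub_add_cancel (le_of_not_gt hik)]
      · obtain ⟨i, hi⟩ := Set.mem_iUnion₂.1 hx1
        obtain ⟨hik, hxU⟩ := hi
        left
        exact Set.mem_biUnion hik (Set.mem_symmDiff.2 (Or.inr ⟨hxU, fun hxf =>
          hx2 (Set.mem_iUnion.2 ⟨i, hxf⟩)⟩))
    calc μ (symmDiff (⋃ i, f i) (⋃ i ∈ Finset.range k₀, U i))
        ≤ μ ((⋃ i ∈ Finset.range k₀, symmDiff (f i) (U i)) ∪ ⋃ i, f (i + k₀)) :=
          measure_mono hsub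
      _ ≤ μ (⋃ i ∈ Finset.range k₀, symmDiff (f i) (U i)) + μ (⋃ i, f (i + k₀)) :=
          measure_union_le _ _
      _ ≤ (∑ i ∈ Finset.range k₀, μ (symmDiff (f i) (U i))) + ∑' i, μ (f (i + k₀)) :=
          add_le_add (measure_biUnion_finset_le _ _) (measure_iUnion_le _)
      _ ≤ (∑ _i ∈ Finset.range k₀, ε₁) + ε / 2 :=
          add_le_add (Finset.sum_le_sum fun i _ => hU i) hk₀.le
      _ ≤ ε / 2 + ε / 2 := by
          refine add_le_add ?_ le_rfl
          rw [Finset.sum_const, Finset.card_range, nsmul_eq_mul, hε₁def]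
          calc (k₀ : ENNReal) * (ε / 2 / (k₀ + 1)) ≤ (k₀ + 1) * (ε / 2 / (k₀ + 1)) := by
                gcongr
                · exact le_self_add
            _ ≤ ε / 2 := ENNReal.mul_div_le
      _ = ε := ENNReal.add_halves ε

end Approx

section Shift

variable {ℓ m : ℕ} {P : Fin m → ℝ} {μ : Measure (Conf ℓ m)}

lemma measurable_shift (g : FG ℓ) : Measurable (shift (m := m) g) :=
  measurable_pi_lambda _ fun _ => measurable_pi_apply _

lemma shift_preimage_cylSet (g : FG ℓ) (T : Finset (FG ℓ)) (σ : FG ℓ → Fin m) :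
    shift (m := m) g ⁻¹' cylSet T σ
      = cylSet (T.image (fun h => g⁻¹ * h)) (fun h => σ (g * h)) := by
  classical
  ext x
  constructor
  · rintro hx h' hh'
    rcases Finset.mem_image.1 hh' with ⟨h, hh, rfl⟩
    dsimp only
    rw [mul_inv_cancel_left]
    exact hx h hh
  · intro hx h hh
    have h2 := hx (g⁻¹ * h) (Finset.mem_image_of_mem _ hh)
    dsimp only at h2
    rwa [mul_inv_cancel_left] at h2

lemma measurePreserving_shift (hμ : IsBernoulli P μ) (g : FG ℓ) :
    MeasurePreserving (shift (m := m) g) μ μ := by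
  haveI := hμ.1
  refine ⟨measurable_shift g, ?_⟩
  haveI : IsProbabilityMeasure (Measure.map (shift (m := m) g) μ) :=
    Measure.isProbabilityMeasure_map (measurable_shift g).aemeasurable
  refine ext_of_generate_finite (cylPi _ m) pi_eq_generateFrom_cylPi isPiSystem_cylPi ?_ ?_
  · rintro C ⟨T, σ, rfl⟩
    rw [Measure.map_apply (measurable_shift g) (measurableSet_cylSet _ _),
      shift_preimage_cylSet, hμ.cyl, hμ.cyl]
    congr 1
    rw [Finset.prod_image (fun h _ h' _ hh => by
      have := congrArg (fun z => g * z) hh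
      simpa using this)]
    exact Finset.prod_congr rfl fun h _ => by rw [mul_inv_cancel_left]
  · simp

lemma shift_shift_inv (g : FG ℓ) (x : Conf ℓ m) : shift g (shift g⁻¹ x) = x := by
  funext h
  show x ((g⁻¹)⁻¹ * (g⁻¹ * h)) = x h
  rw [inv_inv, mul_inv_cancel_left]

lemma shift_inv_shift (g : FG ℓ) (x : Conf ℓ m) : shift g⁻¹ (shift g x) = x := by
  have h := shift_shift_inv (m := m) g⁻¹ x
  rwa [inv_inv] at h

lemma shift_image_eq_preimage (g : FG ℓ) (W : Set (Conf ℓ m)) :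
    shift g '' W = shift g⁻¹ ⁻¹' W := by
  ext x
  constructor
  · rintro ⟨y, hy, rfl⟩
    show shift g⁻¹ (shift g y) ∈ W
    rw [shift_inv_shift]
    exact hy
  · intro hx
    exact ⟨shift g⁻¹ x, hx, shift_shift_inv g x⟩

end Shift

section Axis

variable {ℓ : ℕ}

lemma axis_injective (a : Fin ℓ) :
    Function.Injective (fun z : ℤ => (FreeGroup.of a : FG ℓ) ^ z) := by
  classical
  intro z₁ z₂ h
  let χ : FG ℓ →* Multiplicative ℤ :=
    FreeGroup.lift fun i => Multiplicative.ofAdd (if i = a then 1 else 0)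
  have hχ : χ (FreeGroup.of a) = Multiplicative.ofAdd 1 := by
    simp [χ, FreeGroup.lift_apply_of]
  have h2 := congrArg χ h
  simp only [map_zpow, hχ] at h2
  have h3 := congrArg Multiplicative.toAdd h2
  simpa [toAdd_zpow] using h3

lemma axis_injective_nat (a : Fin ℓ) :
    Function.Injective (fun i : ℕ => (FreeGroup.of a : FG ℓ) ^ i) := by
  intro i j h
  have h2 : (FreeGroup.of a : FG ℓ) ^ (i : ℤ) = (FreeGroup.of a : FG ℓ) ^ (j : ℤ) := by
    rw [zpow_natCast, zpow_natCast]; exact h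
  exact_mod_cast axis_injective a h2

lemma eventually_translate_ne (a : Fin ℓ) (T₁ T₂ : Finset (FG ℓ)) :
    ∃ N₀ : ℕ, ∀ N ≥ N₀, ∀ g ∈ T₁, ∀ h ∈ T₂, (FreeGroup.of a : FG ℓ) ^ N * h ≠ g := by
  classical
  set Bad : Set ℕ := {N : ℕ | ∃ g ∈ T₁, ∃ h ∈ T₂, (FreeGroup.of a : FG ℓ) ^ N * h = g}
    with hBad
  have hsub : Bad ⊆ ⋃ p ∈ ((T₁ ×ˢ T₂ : Finset (FG ℓ × FG ℓ)) : Set (FG ℓ × FG ℓ)),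
      {N : ℕ | (FreeGroup.of a : FG ℓ) ^ N = p.1 * p.2⁻¹} := by
    rintro N ⟨g, hg, h, hh, hN⟩
    have hp : ((g, h) : FG ℓ × FG ℓ) ∈ ((T₁ ×ˢ T₂ : Finset (FG ℓ × FG ℓ)) :
        Set (FG ℓ × FG ℓ)) := by
      simp only [Finset.coe_product, Set.mem_prod]
      exact ⟨hg, hh⟩
    refine Set.mem_biUnion hp ?_
    simp only [Set.mem_setOf_eq]
    exact eq_mul_inv_iff_mul_eq.2 hN
  have hfin : Bad.Finite := by
    refine Set.Finite.subset (Set.Finite.biUnion (T₁ ×ˢ T₂).finite_toSet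
      (fun p _ => Set.Subsingleton.finite ?_)) hsub
    intro N hN N' hN'
    exact axis_injective_nat a (hN.trans hN'.symm)
  obtain ⟨B, hB⟩ := hfin.bddAbove
  refine ⟨B + 1, fun N hN g hg h hh hEq => ?_⟩
  have hNB : N ∈ Bad := ⟨g, hg, h, hh, hEq⟩
  have := hB hNB
  omega

end Axis


section KsetSec

variable {ℓ m : ℕ}

lemma shift_update (c g : FG ℓ) (x : Conf ℓ m) (v : Fin m) :
    shift c (Function.update x g v) = Function.update (shift c x) (c * g) v := by
  classical
  funext h
  by_cases hh : h = c * g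
  · subst hh
    rw [Function.update_self]
    show Function.update x g v (c⁻¹ * (c * g)) = v
    rw [inv_mul_cancel_left, Function.update_self]
  · rw [Function.update_of_ne hh]
    show Function.update x g v (c⁻¹ * h) = x (c⁻¹ * h)
    refine Function.update_of_ne ?_ _ _
    intro hch
    exact hh (by rw [← hch, mul_inv_cancel_left])

/-- Modify the coordinates `c 0, …, c (n-1)` to the values given by `w`. -/
noncomputable def modC (c : ℕ → FG ℓ) (n : ℕ) (w : Fin n → Fin m) (x : Conf ℓ m) :
    Conf ℓ m :=
  fun g => if h : ∃ j : Fin n, g = c j then w h.choose else x g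

lemma measurable_modC (c : ℕ → FG ℓ) (n : ℕ) (w : Fin n → Fin m) :
    Measurable (modC (m := m) c n w) := by
  refine measurable_pi_lambda _ fun g => ?_
  by_cases h : ∃ j : Fin n, g = c j
  · simp only [modC, dif_pos h]
    exact measurable_const
  · simp only [modC, dif_neg h]
    exact measurable_pi_apply g

/-- The core of `A` along the coordinates enumerated by `c`: all points all of whose
modifications on finitely many of the `c j` belong to `A`. -/
def Kset (c : ℕ → FG ℓ) (A : Set (Conf ℓ m)) : Set (Conf ℓ m) :=
  ⋂ (n : ℕ), ⋂ (w : Fin n → Fin m), {x | modC c n w x ∈ A}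

lemma measurableSet_Kset (c : ℕ → FG ℓ) {A : Set (Conf ℓ m)} (hA : MeasurableSet A) :
    MeasurableSet (Kset c A) :=
  MeasurableSet.iInter fun n => MeasurableSet.iInter fun w => (measurable_modC c n w) hA

lemma mem_Kset_iff {c : ℕ → FG ℓ} {A : Set (Conf ℓ m)} {x : Conf ℓ m} :
    x ∈ Kset c A ↔ ∀ x' : Conf ℓ m,
      (∃ n : ℕ, ∀ g : FG ℓ, (∀ j < n, g ≠ c j) → x' g = x g) → x' ∈ A := by
  constructor
  · intro hx x' ⟨n, hagree⟩
    have hx' : x' = modC c n (fun j => x' (c j)) x := by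
      funext g
      by_cases h : ∃ j : Fin n, g = c j
      · rw [modC, dif_pos h]
        rw [← h.choose_spec]
      · rw [modC, dif_neg h]
        refine hagree g fun j hj hgj => h ⟨⟨j, hj⟩, hgj⟩
    rw [hx']
    exact Set.mem_iInter.1 (Set.mem_iInter.1 hx n) (fun j => x' (c j))
  · intro h
    refine Set.mem_iInter.2 fun n => Set.mem_iInter.2 fun w => ?_
    refine h (modC c n w x) ⟨n, fun g hg => ?_⟩
    rw [modC, dif_neg]
    rintro ⟨j, rfl⟩
    exact hg j j.2 rfl

lemma Kset_subset {c : ℕ → FG ℓ} {A : Set (Conf ℓ m)} : Kset c A ⊆ A := by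
  intro x hx
  exact mem_Kset_iff.1 hx x ⟨0, fun g _ => rfl⟩

lemma Kset_update_mem {c : ℕ → FG ℓ} {A : Set (Conf ℓ m)} (j₀ : ℕ) (x : Conf ℓ m)
    (v : Fin m) (hx : x ∈ Kset c A) : Function.update x (c j₀) v ∈ Kset c A := by
  rw [mem_Kset_iff] at hx ⊢
  rintro x' ⟨n, hagree⟩
  refine hx x' ⟨max n (j₀ + 1), fun g hg => ?_⟩
  have h1 : ∀ j < n, g ≠ c j := fun j hj =>
    hg j (lt_of_lt_of_le hj (le_max_left _ _))
  have h2 : g ≠ c j₀ := hg j₀ (lt_of_lt_of_le (Nat.lt_succ_self j₀) (le_max_right _ _))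
  rw [hagree g h1]
  exact Function.update_of_ne h2 _ _

lemma Kset_update_iff {c : ℕ → FG ℓ} {A : Set (Conf ℓ m)} (j₀ : ℕ) (x : Conf ℓ m)
    (v : Fin m) : Function.update x (c j₀) v ∈ Kset c A ↔ x ∈ Kset c A := by
  constructor
  · intro h
    have h2 := Kset_update_mem j₀ _ (x (c j₀)) h
    rwa [Function.update_idem, Function.update_eq_self] at h2
  · exact Kset_update_mem j₀ x v

end KsetSec

section Mixing

variable {ℓ m : ℕ} {P : Fin m → ℝ} {μ : Measure (Conf ℓ m)}

/-- Asymptotic independence along the powers of a generator. -/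
lemma mixing_lower (hμ : IsBernoulli P μ) (hP0 : ∀ i, 0 ≤ P i) [Nonempty (Fin m)]
    (a : Fin ℓ) {K₁ K₂ : Set (Conf ℓ m)}
    (hK₁ : MeasurableSet K₁) (hK₂ : MeasurableSet K₂) (ε : ENNReal) (hε : 0 < ε)
    (hε1 : ε ≤ 1) :
    ∃ N₀ : ℕ, ∀ N ≥ N₀,
      μ K₁ * μ K₂
        ≤ μ (K₁ ∩ (shift ((FreeGroup.of a : FG ℓ) ^ N)⁻¹ ⁻¹' K₂)) + 5 * ε := by
  haveI := hμ.1
  obtain ⟨U₁, hU₁f, hU₁m, hU₁⟩ := exists_finitary_approx hμ hK₁ ε hε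
  obtain ⟨U₂, hU₂f, hU₂m, hU₂⟩ := exists_finitary_approx hμ hK₂ ε hε
  obtain ⟨T₁, hT₁⟩ := hU₁f
  obtain ⟨T₂, hT₂⟩ := hU₂f
  obtain ⟨N₀, hN₀⟩ := eventually_translate_ne a T₁ T₂
  refine ⟨N₀, fun N hN => ?_⟩
  set b : FG ℓ := FreeGroup.of a with hb
  set c : FG ℓ := (b ^ N)⁻¹ with hc
  have hmp : MeasurePreserving (shift (m := m) c) μ μ := measurePreserving_shift hμ c
  have hmc : Measurable (shift (m := m) c) := measurable_shift c
  -- membership translation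
  have hpull_mem : ∀ (W : Set (Conf ℓ m)) (x : Conf ℓ m),
      x ∈ shift (m := m) c ⁻¹' W ↔ shift c x ∈ W := fun _ _ => Iff.rfl
  -- invariance of U₁ outside T₁
  have hU₁inv : ∀ g ∉ T₁, ∀ x v, Function.update x g v ∈ U₁ ↔ x ∈ U₁ :=
    IsFinitaryS.update_inv hT₁
  have hU₂inv : ∀ g ∉ T₂, ∀ x v, Function.update x g v ∈ U₂ ↔ x ∈ U₂ :=
    IsFinitaryS.update_inv hT₂
  -- invariance of the pullback of U₂ on T₁
  have hpullinv : ∀ g ∈ T₁, ∀ x v,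
      Function.update x g v ∈ shift (m := m) c ⁻¹' U₂ ↔ x ∈ shift (m := m) c ⁻¹' U₂ := by
    intro g hg x v
    rw [hpull_mem, shift_update, hpull_mem]
    refine hU₂inv (c * g) ?_ _ _
    intro hcg
    exact hN₀ N hN g hg (c * g) hcg (by rw [hc]; group)
  have hindep : μ (U₁ ∩ shift (m := m) c ⁻¹' U₂) = μ U₁ * μ (shift (m := m) c ⁻¹' U₂) :=
    meas_inter_of_indep hμ hP0 hU₁m (hmc hU₂m) T₁ hU₁inv hpullinv
  have hμpull : ∀ (W : Set (Conf ℓ m)), MeasurableSet W →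
      μ (shift (m := m) c ⁻¹' W) = μ W := fun W hW =>
    hmp.measure_preimage hW.nullMeasurableSet
  -- measure comparisons
  have hKU₁ : μ K₁ ≤ μ U₁ + ε := by
    calc μ K₁ ≤ μ (U₁ ∪ symmDiff K₁ U₁) := by
          refine measure_mono fun x hx => ?_
          by_cases hxU : x ∈ U₁
          · exact Or.inl hxU
          · exact Or.inr (Set.mem_symmDiff.2 (Or.inl ⟨hx, hxU⟩))
      _ ≤ μ U₁ + μ (symmDiff K₁ U₁) := measure_union_le _ _
      _ ≤ μ U₁ + ε := add_le_add_right hU₁ _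
  have hKU₂ : μ K₂ ≤ μ U₂ + ε := by
    calc μ K₂ ≤ μ (U₂ ∪ symmDiff K₂ U₂) := by
          refine measure_mono fun x hx => ?_
          by_cases hxU : x ∈ U₂
          · exact Or.inl hxU
          · exact Or.inr (Set.mem_symmDiff.2 (Or.inl ⟨hx, hxU⟩))
      _ ≤ μ U₂ + μ (symmDiff K₂ U₂) := measure_union_le _ _
      _ ≤ μ U₂ + ε := add_le_add_right hU₂ _
  have hUK : μ (U₁ ∩ shift (m := m) c ⁻¹' U₂)
      ≤ μ (K₁ ∩ shift (m := m) c ⁻¹' K₂) + (ε + ε) := by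
    have hsub : U₁ ∩ shift (m := m) c ⁻¹' U₂
        ⊆ (K₁ ∩ shift (m := m) c ⁻¹' K₂) ∪ (symmDiff K₁ U₁
            ∪ shift (m := m) c ⁻¹' (symmDiff K₂ U₂)) := by
      rintro x ⟨hx1, hx2⟩
      by_cases hxK₁ : x ∈ K₁
      · by_cases hxK₂ : shift c x ∈ K₂
        · exact Or.inl ⟨hxK₁, hxK₂⟩
        · exact Or.inr (Or.inr (Set.mem_symmDiff.2 (Or.inr ⟨hx2, hxK₂⟩)))
      · exact Or.inr (Or.inl (Set.mem_symmDiff.2 (Or.inr ⟨hx1, hxK₁⟩)))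
    calc μ (U₁ ∩ shift (m := m) c ⁻¹' U₂)
        ≤ μ ((K₁ ∩ shift (m := m) c ⁻¹' K₂) ∪ (symmDiff K₁ U₁
            ∪ shift (m := m) c ⁻¹' (symmDiff K₂ U₂))) := measure_mono hsub
      _ ≤ μ (K₁ ∩ shift (m := m) c ⁻¹' K₂) + μ (symmDiff K₁ U₁
            ∪ shift (m := m) c ⁻¹' (symmDiff K₂ U₂)) := measure_union_le _ _
      _ ≤ μ (K₁ ∩ shift (m := m) c ⁻¹' K₂) + (μ (symmDiff K₁ U₁)
            + μ (shift (m := m) c ⁻¹' (symmDiff K₂ U₂))) :=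
          add_le_add_right (measure_union_le _ _) _
      _ ≤ μ (K₁ ∩ shift (m := m) c ⁻¹' K₂) + (ε + ε) := by
          refine add_le_add_right (add_le_add hU₁ ?_) _
          rw [hμpull _ (hK₂.symmDiff hU₂m)]
          exact hU₂
  have hle1 : ∀ (W : Set (Conf ℓ m)), μ W ≤ 1 := fun W => prob_le_one
  calc μ K₁ * μ K₂ ≤ (μ U₁ + ε) * (μ U₂ + ε) := mul_le_mul' hKU₁ hKU₂
    _ = μ U₁ * μ U₂ + (μ U₁ * ε + ε * μ U₂ + ε * ε) := by ring
    _ ≤ μ U₁ * μ U₂ + (1 * ε + ε * 1 + ε * 1) := by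
        have h1 : μ U₁ * ε ≤ 1 * ε := mul_le_mul_left (hle1 U₁) ε
        have h2 : ε * μ U₂ ≤ ε * 1 := mul_le_mul_right (hle1 U₂) ε
        have h3 : ε * ε ≤ ε * 1 := mul_le_mul_right hε1 ε
        exact add_le_add_right (add_le_add (add_le_add h1 h2) h3) _
    _ = μ U₁ * μ (shift (m := m) c ⁻¹' U₂) + 3 * ε := by
        rw [hμpull _ hU₂m]; ring
    _ = μ (U₁ ∩ shift (m := m) c ⁻¹' U₂) + 3 * ε := by rw [hindep]
    _ ≤ (μ (K₁ ∩ shift (m := m) c ⁻¹' K₂) + (ε + ε)) + 3 * ε := add_le_add_left hUK _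
    _ = μ (K₁ ∩ shift (m := m) c ⁻¹' K₂) + 5 * ε := by ring

end Mixing

theorem beta_limsup_on_tail_set
    {ℓ m n : ℕ} (hℓ : 1 ≤ ℓ) (a : Fin ℓ) (P : Fin m → ℝ) (Q : Fin n → ℝ)
    (hP : ∀ i, 0 < P i) (hQ : ∀ j, 0 < Q j)
    (hPsum : ∑ i, P i = 1) (hQsum : ∑ j, Q j = 1)
    (μp : Measure (Conf ℓ m)) (μq : Measure (Conf ℓ n))
    (hμp : IsBernoulli P μp) (hμq : IsBernoulli Q μq)
    (φ : Conf ℓ m → Conf ℓ n) (ψ : Conf ℓ n → Conf ℓ m)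
    (hiso : IsFinitaryIso μp μq φ ψ) (hexp : FiniteExpectation μp μq φ ψ)
    (M : ℕ) (η : FG ℓ → Fin m) (hD : 0 < μp (Dset φ a M η))
    (A : Set (Conf ℓ m)) (hA : MeasurableSet A)
    (hTail : ∃ E ⊆ Dset φ a M η, μp E = 0 ∧ TailProp a M (Dset φ a M η) E A) :
    ∃ t₀ : ℝ, 0 < t₀ ∧ ∀ t : ℝ, t₀ < t →
      limsup
        (fun N : ℕ =>
          (∫ x in A ∩ (shift ((FreeGroup.of a) ^ N) '' A),
              ∏ i ∈ Finset.range N, (P (x ((FreeGroup.of a) ^ i))) ^ (-t) ∂μp)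
            ^ ((N : ℝ)⁻¹))
        atTop = ∑ i, P i ^ (1 - t) ∧
      Tendsto
        (fun N : ℕ =>
          (∫ x, ∏ i ∈ Finset.range N, (P (x ((FreeGroup.of a) ^ i))) ^ (-t) ∂μp)
            ^ ((N : ℝ)⁻¹))
        atTop (nhds (∑ i, P i ^ (1 - t))) := by
  classical
  haveI := hμp.1
  have hm : 0 < m := by
    rcases Nat.eq_zero_or_pos m with hm0 | hm
    · subst hm0
      simp at hPsum
    · exact hm
  haveI : Nonempty (Fin m) := ⟨⟨0, hm⟩⟩
  have hP0 : ∀ i, 0 ≤ P i := fun i => (hP i).le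
  have hP1 : ∀ i, P i ≤ 1 := by
    intro i
    rw [← hPsum]
    exact Finset.single_le_sum (fun j _ => (hP j).le) (Finset.mem_univ i)
  obtain ⟨E, hED, hE0, hTailP⟩ := hTail
  set b : FG ℓ := FreeGroup.of a with hb
  set D : Set (Conf ℓ m) := Dset φ a M η with hDdef
  set c₁ : ℕ → FG ℓ := fun j => b ^ ((M : ℤ) + 1 + j) with hc₁
  set c₂ : ℕ → FG ℓ := fun j => b ^ (-(M : ℤ) - 1 - j) with hc₂
  set K₁ : Set (Conf ℓ m) := Kset c₁ A with hK₁def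
  set K₂ : Set (Conf ℓ m) := Kset c₂ A with hK₂def
  have hK₁m : MeasurableSet K₁ := measurableSet_Kset c₁ hA
  have hK₂m : MeasurableSet K₂ := measurableSet_Kset c₂ hA
  have hDK₁ : D \ E ⊆ K₁ := by
    intro x hx
    rw [hK₁def, mem_Kset_iff]
    rintro x' ⟨n, hagree⟩
    refine hTailP x hx (n + 1) x' (Or.inr ?_)
    intro g hg
    refine hagree g ?_
    intro j hj hgj
    refine hg ⟨(M : ℤ) + 1 + j, by omega, by push_cast; omega, ?_⟩
    rw [hgj, hc₁]
  have hDK₂ : D \ E ⊆ K₂ := by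
    intro x hx
    rw [hK₂def, mem_Kset_iff]
    rintro x' ⟨n, hagree⟩
    refine hTailP x hx (n + 1) x' (Or.inl ?_)
    intro g hg
    refine hagree g ?_
    intro j hj hgj
    refine hg ⟨-(M : ℤ) - 1 - j, by push_cast; omega, by omega, ?_⟩
    rw [hgj, hc₂]
  have hK₁A : K₁ ⊆ A := Kset_subset
  have hK₂A : K₂ ⊆ A := Kset_subset
  have hDDE : μp D ≤ μp (D \ E) := by
    calc μp D ≤ μp ((D \ E) ∪ E) := by
          refine measure_mono fun x hx => ?_
          by_cases hxE : x ∈ E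
          · exact Or.inr hxE
          · exact Or.inl ⟨hx, hxE⟩
      _ ≤ μp (D \ E) + μp E := measure_union_le _ _
      _ = μp (D \ E) := by rw [hE0, add_zero]
  have hdK₁ : μp D ≤ μp K₁ := hDDE.trans (measure_mono hDK₁)
  have hdK₂ : μp D ≤ μp K₂ := hDDE.trans (measure_mono hDK₂)
  set d : ENNReal := μp D with hd
  have hd0 : 0 < d := hD
  have hd1 : d ≤ 1 := prob_le_one
  have hdne : d ≠ 0 := hd0.ne'
  set ε : ENNReal := d * d / 8 with hε
  have hdd0 : d * d ≠ 0 := mul_ne_zero hdne hdne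
  have hε0 : 0 < ε := ENNReal.div_pos hdd0 (by norm_num)
  have hεmul : ε * 8 = d * d := ENNReal.div_mul_cancel (by norm_num) (by norm_num)
  have hε1 : ε ≤ 1 := by
    refine (ENNReal.mul_le_mul_iff_left (c := 8) (by norm_num) (by norm_num)).1 ?_
    rw [hεmul, one_mul]
    exact le_trans (mul_le_one' hd1 hd1) (by norm_num)
  have hεtop : ε ≠ ⊤ := (lt_of_le_of_lt hε1 ENNReal.one_lt_top).ne
  obtain ⟨N₀, hN₀⟩ := mixing_lower hμp hP0 a hK₁m hK₂m ε hε0 hε1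
  have hSlb : ∀ N, N₀ ≤ N → 3 * ε ≤ μp (K₁ ∩ (shift (b ^ N)⁻¹ ⁻¹' K₂)) := by
    intro N hN
    have hdd : d * d ≤ μp (K₁ ∩ (shift (b ^ N)⁻¹ ⁻¹' K₂)) + 5 * ε :=
      le_trans (mul_le_mul' hdK₁ hdK₂) (hN₀ N hN)
    have h8 : d * d = 3 * ε + 5 * ε := by
      rw [← hεmul]; ring
    rw [h8] at hdd
    have h5 : (5 : ENNReal) * ε ≠ ⊤ := ENNReal.mul_ne_top (by norm_num) hεtop
    exact (ENNReal.add_le_add_iff_right h5).1 hdd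
  have h3εne : (3 : ENNReal) * ε ≠ 0 := mul_ne_zero (by norm_num) hε0.ne'
  have h3εtop : (3 : ENNReal) * ε ≠ ⊤ := ENNReal.mul_ne_top (by norm_num) hεtop
  set δr : ℝ := ((3 : ENNReal) * ε).toReal with hδrdef
  have hδrpos : 0 < δr := ENNReal.toReal_pos h3εne h3εtop
  refine ⟨1, one_pos, fun t ht => ?_⟩
  have ht0 : 0 < t := lt_trans one_pos ht
  set β : ℝ := ∑ i, P i ^ (1 - t) with hβ
  have hβpos : 0 < β :=
    Finset.sum_pos (fun i _ => Real.rpow_pos_of_pos (hP i) _) Finset.univ_nonempty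
  have hweight : (∑ v, (P v) ^ (-t) * P v) = β := by
    rw [hβ]
    refine Finset.sum_congr rfl fun v _ => ?_
    rw [show (1 : ℝ) - t = -t + 1 by ring, Real.rpow_add (hP v), Real.rpow_one]
  have hfun1 : ∀ v : Fin m, (1 : ℝ) ≤ (P v) ^ (-t) := fun v =>
    Real.one_le_rpow_of_pos_of_le_one_of_nonpos (hP v) (hP1 v) (by linarith)
  have hrw : ∀ (N : ℕ) (x : Conf ℓ m), ∏ i ∈ Finset.range N, (P (x (b ^ i))) ^ (-t)
      = ∏ g ∈ (Finset.range N).image (fun i : ℕ => b ^ i), (P (x g)) ^ (-t) := by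
    intro N x
    rw [Finset.prod_image]
    intro i _ j _ h
    exact axis_injective_nat a h
  have hfull : ∀ N : ℕ,
      ∫ x, ∏ i ∈ Finset.range N, (P (x (b ^ i))) ^ (-t) ∂μp = β ^ N := by
    intro N
    calc ∫ x, ∏ i ∈ Finset.range N, (P (x (b ^ i))) ^ (-t) ∂μp
        = ∫ x in Set.univ,
            ∏ g ∈ (Finset.range N).image (fun i : ℕ => b ^ i), (P (x g)) ^ (-t) ∂μp := by
          rw [setIntegral_univ]
          exact integral_congr_ae (ae_of_all _ fun x => hrw N x)
      _ = (μp Set.univ).toReal * (∑ v, (P v) ^ (-t) * P v)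
            ^ ((Finset.range N).image (fun i : ℕ => b ^ i)).card :=
          master_integral hμp hP0 (fun v => (P v) ^ (-t)) _ Set.univ MeasurableSet.univ
            (fun g _ x v => by simp)
      _ = β ^ N := by
          rw [measure_univ, ENNReal.toReal_one, one_mul, hweight,
            Finset.card_image_of_injective _ (axis_injective_nat a), Finset.card_range]
  have hnn : ∀ (N : ℕ) (x : Conf ℓ m),
      0 ≤ ∏ i ∈ Finset.range N, (P (x (b ^ i))) ^ (-t) := fun N x =>
    Finset.prod_nonneg fun i _ => Real.rpow_nonneg (hP0 _) _
  have hIntN : ∀ N : ℕ, Integrable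
      (fun x : Conf ℓ m => ∏ i ∈ Finset.range N, (P (x (b ^ i))) ^ (-t)) μp := by
    intro N
    exact (integrable_prod_coord (fun v => (P v) ^ (-t)) _).congr
      (ae_of_all _ fun x => (hrw N x).symm)
  have hup : ∀ N : ℕ,
      ∫ x in A ∩ (shift (b ^ N) '' A),
        ∏ i ∈ Finset.range N, (P (x (b ^ i))) ^ (-t) ∂μp ≤ β ^ N := by
    intro N
    calc ∫ x in A ∩ (shift (b ^ N) '' A),
          ∏ i ∈ Finset.range N, (P (x (b ^ i))) ^ (-t) ∂μp
        ≤ ∫ x in Set.univ, ∏ i ∈ Finset.range N, (P (x (b ^ i))) ^ (-t) ∂μp := by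
          refine setIntegral_mono_set (hIntN N).integrableOn
            (ae_of_all _ fun x => hnn N x) ?_
          exact (Set.subset_univ _).eventuallyLE
      _ = β ^ N := by
          rw [setIntegral_univ]
          exact hfull N
  have hlow : ∀ N : ℕ, N₀ ≤ N → 2 * M + 2 ≤ N →
      δr * β ^ (N - (2 * M + 1)) ≤ ∫ x in A ∩ (shift (b ^ N) '' A),
        ∏ i ∈ Finset.range N, (P (x (b ^ i))) ^ (-t) ∂μp := by
    intro N hN1 hN2
    set SN : Set (Conf ℓ m) := K₁ ∩ (shift (b ^ N)⁻¹ ⁻¹' K₂) with hSN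
    have hSNm : MeasurableSet SN := hK₁m.inter ((measurable_shift _) hK₂m)
    have hsub : SN ⊆ A ∩ (shift (b ^ N) '' A) := by
      rintro x ⟨hx1, hx2⟩
      refine ⟨hK₁A hx1, ?_⟩
      rw [shift_image_eq_preimage]
      exact hK₂A hx2
    set Tw : Finset (FG ℓ) := (Finset.Ioo M (N - M)).image (fun i : ℕ => b ^ i) with hTw
    have hTsub : Tw ⊆ (Finset.range N).image (fun i : ℕ => b ^ i) := by
      rw [hTw]
      refine Finset.image_subset_image ?_
      intro i hi
      rw [Finset.mem_Ioo] at hi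
      exact Finset.mem_range.2 (by omega)
    have hSNinv : ∀ g ∈ Tw, ∀ x v, Function.update x g v ∈ SN ↔ x ∈ SN := by
      intro g hg x v
      rw [hTw] at hg
      rcases Finset.mem_image.1 hg with ⟨i, hi, rfl⟩
      rw [Finset.mem_Ioo] at hi
      have hK₁i : Function.update x (b ^ i) v ∈ K₁ ↔ x ∈ K₁ := by
        have hcoord : (b : FG ℓ) ^ i = c₁ (i - M - 1) := by
          rw [hc₁]
          dsimp only
          have hcast : ((M : ℤ) + 1 + ((i - M - 1 : ℕ) : ℤ)) = (i : ℤ) := by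
            have h1 : (i - M - 1 : ℕ) = i - (M + 1) := by omega
            rw [h1, Nat.cast_sub (by omega)]
            push_cast
            ring
          rw [hcast, zpow_natCast]
        rw [hK₁def, hcoord]
        exact Kset_update_iff _ x v
      have hK₂i : Function.update x (b ^ i) v ∈ shift (b ^ N)⁻¹ ⁻¹' K₂
          ↔ x ∈ shift (b ^ N)⁻¹ ⁻¹' K₂ := by
        show shift (b ^ N)⁻¹ (Function.update x (b ^ i) v) ∈ K₂
          ↔ shift (b ^ N)⁻¹ x ∈ K₂
        rw [shift_update]
        have hcoord : ((b : FG ℓ) ^ N)⁻¹ * b ^ i = c₂ (N - M - 1 - i) := by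
          rw [hc₂]
          dsimp only
          have h1 : ((b : FG ℓ) ^ N)⁻¹ * b ^ i = b ^ ((i : ℤ) - (N : ℤ)) := by
            rw [← zpow_natCast b N, ← zpow_natCast b i, ← zpow_neg, ← zpow_add]
            congr 1
            ring
          have h2 : (-(M : ℤ) - 1 - ((N - M - 1 - i : ℕ) : ℤ)) = (i : ℤ) - (N : ℤ) := by
            have h3 : (N - M - 1 - i : ℕ) = N - (M + 1 + i) := by omega
            rw [h3, Nat.cast_sub (by omega)]
            push_cast
            ring
          rw [h1, ← h2]
        rw [hcoord, hK₂def]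
        exact Kset_update_iff _ _ v
      rw [hSN, Set.mem_inter_iff, Set.mem_inter_iff, hK₁i, hK₂i]
    have hcard : Tw.card = N - (2 * M + 1) := by
      rw [hTw, Finset.card_image_of_injective _ (axis_injective_nat a), Nat.card_Ioo]
      omega
    have hmaster : ∫ x in SN, ∏ g ∈ Tw, (P (x g)) ^ (-t) ∂μp
        = (μp SN).toReal * β ^ (N - (2 * M + 1)) := by
      calc ∫ x in SN, ∏ g ∈ Tw, (P (x g)) ^ (-t) ∂μp
          = (μp SN).toReal * (∑ v, (P v) ^ (-t) * P v) ^ Tw.card :=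
            master_integral hμp hP0 (fun v => (P v) ^ (-t)) Tw SN hSNm hSNinv
        _ = (μp SN).toReal * β ^ (N - (2 * M + 1)) := by rw [hweight, hcard]
    have hμSN : δr ≤ (μp SN).toReal :=
      ENNReal.toReal_mono (measure_ne_top _ _) (hSlb N hN1)
    calc δr * β ^ (N - (2 * M + 1))
        ≤ (μp SN).toReal * β ^ (N - (2 * M + 1)) :=
          mul_le_mul_of_nonneg_right hμSN (le_of_lt (pow_pos hβpos _))
      _ = ∫ x in SN, ∏ g ∈ Tw, (P (x g)) ^ (-t) ∂μp := hmaster.symm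
      _ ≤ ∫ x in SN, ∏ i ∈ Finset.range N, (P (x (b ^ i))) ^ (-t) ∂μp := by
          refine setIntegral_mono_on
            (integrable_prod_coord (fun v => (P v) ^ (-t)) Tw).integrableOn
            (hIntN N).integrableOn hSNm fun x _ => ?_
          rw [hrw N x, ← Finset.prod_sdiff hTsub]
          exact le_mul_of_one_le_left
            (Finset.prod_nonneg fun g _ => Real.rpow_nonneg (hP0 _) _)
            (by
              calc (1 : ℝ)
                  = ∏ _g ∈ (Finset.range N).image (fun i : ℕ => b ^ i) \ Tw, (1 : ℝ) :=
                    Finset.prod_const_one.symm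
                _ ≤ ∏ g ∈ (Finset.range N).image (fun i : ℕ => b ^ i) \ Tw,
                      (P (x g)) ^ (-t) :=
                    Finset.prod_le_prod (fun g _ => zero_le_one) (fun g _ => hfun1 _))
      _ ≤ ∫ x in A ∩ (shift (b ^ N) '' A),
            ∏ i ∈ Finset.range N, (P (x (b ^ i))) ^ (-t) ∂μp := by
          refine setIntegral_mono_set (hIntN N).integrableOn
            (ae_of_all _ fun x => hnn N x) hsub.eventuallyLE
  -- limit computations
  have hβlim : Tendsto (fun N : ℕ => ((β : ℝ) ^ N) ^ ((N : ℝ)⁻¹)) atTop (nhds β) := by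
    refine Tendsto.congr' ?_ tendsto_const_nhds
    filter_upwards [eventually_ge_atTop 1] with N hN
    have hNne : ((N : ℝ)) ≠ 0 := Nat.cast_ne_zero.2 (by omega)
    rw [← Real.rpow_natCast β N, ← Real.rpow_mul hβpos.le, mul_inv_cancel₀ hNne,
      Real.rpow_one]
  have hinv0 : Tendsto (fun N : ℕ => ((N : ℝ))⁻¹) atTop (nhds 0) :=
    tendsto_inv_atTop_zero.comp tendsto_natCast_atTop_atTop
  have hexp : Tendsto (fun N : ℕ => Real.log δr * ((N : ℝ))⁻¹
      + (1 - (2 * M + 1 : ℝ) * ((N : ℝ))⁻¹) * Real.log β) atTop (nhds (Real.log β)) := by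
    have h1 : Tendsto (fun N : ℕ => Real.log δr * ((N : ℝ))⁻¹) atTop (nhds 0) := by
      simpa using hinv0.const_mul (Real.log δr)
    have h2 : Tendsto (fun N : ℕ => (1 - (2 * M + 1 : ℝ) * ((N : ℝ))⁻¹) * Real.log β)
        atTop (nhds (Real.log β)) := by
      have h3 := ((hinv0.const_mul ((2 * M + 1 : ℝ))).const_sub 1).mul_const (Real.log β)
      simpa using h3
    have h4 := h1.add h2
    rwa [zero_add] at h4
  have hlowlim : Tendsto (fun N : ℕ => (δr * β ^ (N - (2 * M + 1))) ^ ((N : ℝ)⁻¹))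
      atTop (nhds β) := by
    have hcomp : Tendsto (fun N : ℕ => Real.exp (Real.log δr * ((N : ℝ))⁻¹
        + (1 - (2 * M + 1 : ℝ) * ((N : ℝ))⁻¹) * Real.log β)) atTop
        (nhds (Real.exp (Real.log β))) := (Real.continuous_exp.tendsto _).comp hexp
    rw [Real.exp_log hβpos] at hcomp
    refine Tendsto.congr' ?_ hcomp
    filter_upwards [eventually_ge_atTop (2 * M + 2)] with N hN
    have hNne : ((N : ℝ)) ≠ 0 := Nat.cast_ne_zero.2 (by omega)
    have hpos : 0 < δr * β ^ (N - (2 * M + 1)) := mul_pos hδrpos (pow_pos hβpos _)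
    rw [Real.rpow_def_of_pos hpos, Real.log_mul hδrpos.ne' (pow_pos hβpos _).ne',
      Real.log_pow]
    congr 1
    have hcast : ((N - (2 * M + 1) : ℕ) : ℝ) = (N : ℝ) - (2 * M + 1 : ℝ) := by
      rw [Nat.cast_sub (by omega)]
      push_cast
      ring
    rw [hcast]
    field_simp
    try ring
  have hmainlim : Tendsto (fun N : ℕ =>
      (∫ x in A ∩ (shift (b ^ N) '' A),
        ∏ i ∈ Finset.range N, (P (x (b ^ i))) ^ (-t) ∂μp) ^ ((N : ℝ)⁻¹))
      atTop (nhds β) := by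
    refine tendsto_of_tendsto_of_tendsto_of_le_of_le' hlowlim hβlim ?_ ?_
    · filter_upwards [eventually_ge_atTop (max N₀ (2 * M + 2))] with N hN
      exact Real.rpow_le_rpow (le_of_lt (mul_pos hδrpos (pow_pos hβpos _)))
        (hlow N (le_trans (le_max_left _ _) hN) (le_trans (le_max_right _ _) hN))
        (inv_nonneg.2 (Nat.cast_nonneg N))
    · filter_upwards with N
      exact Real.rpow_le_rpow (integral_nonneg fun x => hnn N x) (hup N)
        (inv_nonneg.2 (Nat.cast_nonneg N))
  constructor
  · exact hmainlim.limsup_eq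
  · refine Tendsto.congr (fun N => ?_) hβlim
    rw [hfull N]

end Finitary
end
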